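/- Let b(g,k) be Harer–Zagier coefficients and let 𝔟(g,k) := b(g,k)/(4g+2k−1)!! be the renormalized coefficients. Then for every g ≥ 3: 𝔟(g,g−3) = (9/20)·(g−2)·(g − 13/21)·𝔟(g,g−2), equivalently b(g,g−3) = (21g−13)·2^{g−2}·(6g−7)!!/(700·3^{g−3}·(g−3)!). -/

import Mathlib

open scoped Nat

lemma dfac_add_six (m : ℕ) : (m+6)‼ = (m+6)*(m+4)*(m+2)*m‼ := by
  rw [show m+6 = m+4+2 by ring, Nat.doubleFactorial_add_two,
      show m+4 = m+2+2 by ring, Nat.doubleFactorial_add_two,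
      Nat.doubleFactorial_add_two]
  ring

theorem stmt6
    (b : ℕ → ℤ → ℚ)
    (hb_supp : ∀ g : ℕ, 1 ≤ g → ∀ k : ℤ, ¬ (0 ≤ k ∧ k ≤ (g : ℤ) - 1) → b g k = 0)
    (hb1 : b 1 0 = 1)
    (hrec : ∀ g : ℕ, 1 ≤ g → ∀ k : ℤ, 0 ≤ k → k ≤ (g : ℤ) →
      (4 * (g : ℚ) + 2 * (k : ℚ) + 6) * b (g + 1) k =
        (4 * (g : ℚ) + 2 * (k : ℚ) + 1) * (4 * (g : ℚ) + 2 * (k : ℚ) + 3) *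
          ((4 * (g : ℚ) + 2 * (k : ℚ) + 2) * b g k
            + 4 * (4 * (g : ℚ) + 2 * (k : ℚ) - 1) * b g (k - 1))) :
    ∀ g : ℕ, 3 ≤ g →
      b g ((g : ℤ) - 3) / (((6 * g - 7)‼ : ℕ) : ℚ) =
        (9 / 20) * ((g : ℚ) - 2) * ((g : ℚ) - 13 / 21) *
          (b g ((g : ℤ) - 2) / (((6 * g - 5)‼ : ℕ) : ℚ)) ∧
      b g ((g : ℤ) - 3) =
        (21 * (g : ℚ) - 13) * 2 ^ (g - 2) * (((6 * g - 7)‼ : ℕ) : ℚ) /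
          (700 * 3 ^ (g - 3) * ((g - 3)! : ℚ)) := by
  -- base values
  have hb1m : b 1 (-1) = 0 := hb_supp 1 le_rfl _ (by norm_num)
  have hb11 : b 1 1 = 0 := hb_supp 1 le_rfl _ (by norm_num)
  have hb2m : b 2 (-1) = 0 := hb_supp 2 one_le_two _ (by norm_num)
  have hb22 : b 2 2 = 0 := hb_supp 2 one_le_two _ (by norm_num)
  have h20 := hrec 1 le_rfl 0 (by norm_num) (by norm_num)
  have h21 := hrec 1 le_rfl 1 (by norm_num) (by norm_num)
  norm_num [hb1, hb1m, hb11] at h20 h21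
  have hv20 : b 2 0 = 21 := by linarith
  have hv21 : b 2 1 = 105 := by linarith
  have h30 := hrec 2 one_le_two 0 (by norm_num) (by norm_num)
  have h31 := hrec 2 one_le_two 1 (by norm_num) (by norm_num)
  have h32 := hrec 2 one_le_two 2 (by norm_num) (by norm_num)
  norm_num [hv20, hv21, hb2m, hb22] at h30 h31 h32
  have hv30 : b 3 0 = 1485 := by linarith
  have hv31 : b 3 1 = 18018 := by linarith
  have hv32 : b 3 2 = 50050 := by linarith
  have key : ∀ n : ℕ,
      b (n+3) ((n:ℤ)+2) = 2^(n+2) * (((6*n+15)‼ : ℕ) : ℚ) / (3^(n+3) * ((n+3)! : ℚ)) ∧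
      b (n+3) ((n:ℤ)+1) = 2^(n+2) * (((6*n+13)‼ : ℕ) : ℚ) / (10 * 3^(n+1) * ((n+1)! : ℚ)) ∧
      b (n+3) ((n:ℤ)) = (21*(n:ℚ)+50) * 2^(n+1) * (((6*n+11)‼ : ℕ) : ℚ) / (700 * 3^n * ((n)! : ℚ)) := by
    intro n
    induction n with
    | zero =>
      have d15 : (15‼ : ℕ) = 2027025 := by decide
      have d13 : (13‼ : ℕ) = 135135 := by decide
      have d11 : (11‼ : ℕ) = 10395 := by decide
      refine ⟨?_, ?_, ?_⟩ <;>
        norm_num [d15, d13, d11, hv30, hv31, hv32, Nat.factorial]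
    | succ n ih =>
      obtain ⟨ih1, ih2, ih3⟩ := ih
      have hz : b (n+3) ((n:ℤ)+3) = 0 := hb_supp (n+3) (by omega) _ (by push_cast; omega)
      have h1 := hrec (n+3) (by omega) ((n:ℤ)+3) (by positivity) (by push_cast; omega)
      have h2 := hrec (n+3) (by omega) ((n:ℤ)+2) (by positivity) (by push_cast; omega)
      have h3 := hrec (n+3) (by omega) ((n:ℤ)+1) (by positivity) (by push_cast; omega)
      rw [show n+3+1 = n+4 by ring] at h1 h2 h3
      rw [show ((n:ℤ)+3)-1 = (n:ℤ)+2 by ring] at h1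
      rw [show ((n:ℤ)+2)-1 = (n:ℤ)+1 by ring] at h2
      rw [show ((n:ℤ)+1)-1 = (n:ℤ) by ring] at h3
      push_cast at h1 h2 h3
      rw [hz] at h1
      have v1 : b (n+4) ((n:ℤ)+3)
          = (6*(n:ℚ)+19) * (6*(n:ℚ)+21) * (4 * (6*(n:ℚ)+17) * b (n+3) ((n:ℤ)+2))
            / (6*(n:ℚ)+24) := by
        rw [eq_div_iff (by positivity : (6*(n:ℚ)+24) ≠ 0)]
        linear_combination h1
      have v2 : b (n+4) ((n:ℤ)+2)
          = (6*(n:ℚ)+17) * (6*(n:ℚ)+19) *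
              ((6*(n:ℚ)+18) * b (n+3) ((n:ℤ)+2) + 4 * (6*(n:ℚ)+15) * b (n+3) ((n:ℤ)+1))
            / (6*(n:ℚ)+22) := by
        rw [eq_div_iff (by positivity : (6*(n:ℚ)+22) ≠ 0)]
        linear_combination h2
      have v3 : b (n+4) ((n:ℤ)+1)
          = (6*(n:ℚ)+15) * (6*(n:ℚ)+17) *
              ((6*(n:ℚ)+16) * b (n+3) ((n:ℤ)+1) + 4 * (6*(n:ℚ)+13) * b (n+3) ((n:ℤ)))
            / (6*(n:ℚ)+20) := by
        rw [eq_div_iff (by positivity : (6*(n:ℚ)+20) ≠ 0)]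
        linear_combination h3
      have hfn : ((n)! : ℚ) ≠ 0 := Nat.cast_ne_zero.mpr (Nat.factorial_ne_zero _)
      have hfn3 : ((n+3)! : ℚ) ≠ 0 := Nat.cast_ne_zero.mpr (Nat.factorial_ne_zero _)
      have e1 : (n+1)! = (n+1) * (n)! := Nat.factorial_succ n
      have e2 : (n+2)! = (n+2) * (n+1)! := by
        rw [show n+2 = n+1+1 by ring]; exact Nat.factorial_succ (n+1)
      have e3 : (n+3)! = (n+3) * (n+2)! := by
        rw [show n+3 = n+2+1 by ring]; exact Nat.factorial_succ (n+2)
      have e4 : (n+4)! = (n+4) * (n+3)! := by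
        rw [show n+4 = n+3+1 by ring]; exact Nat.factorial_succ (n+3)
      have d13 : (6*n+13)‼ = (6*n+13) * (6*n+11)‼ := by
        rw [show 6*n+13 = 6*n+11+2 by ring, Nat.doubleFactorial_add_two]
      have d15 : (6*n+15)‼ = (6*n+15) * (6*n+13)‼ := by
        rw [show 6*n+15 = 6*n+13+2 by ring, Nat.doubleFactorial_add_two]
      refine ⟨?_, ?_, ?_⟩
      · rw [show ((n+1:ℕ):ℤ)+2 = (n:ℤ)+3 by push_cast; ring, show n+1+3 = n+4 by ring,
            v1, ih1, show 6*(n+1)+15 = 6*n+15+6 by ring, dfac_add_six (6*n+15), e4]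
        push_cast
        field_simp
        ring
      · have D19 : (6*(n+1)+13)‼ = (6*n+19)*(6*n+17)*(6*n+15)*(6*n+13)‼ := by
          rw [show 6*(n+1)+13 = 6*n+13+6 by ring, dfac_add_six]
        rw [show ((n+1:ℕ):ℤ)+1 = (n:ℤ)+2 by push_cast; ring, show n+1+3 = n+4 by ring,
            show n+1+1 = n+2 by ring, D19, v2, ih1, ih2, d15, e3, e2, e1]
        push_cast
        field_simp
        ring
      · have D17 : (6*(n+1)+11)‼ = (6*n+17)*(6*n+15)*(6*n+13)*(6*n+11)‼ := by
          rw [show 6*(n+1)+11 = 6*n+11+6 by ring, dfac_add_six]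
        rw [show ((n+1:ℕ):ℤ) = (n:ℤ)+1 by push_cast; ring, show n+1+3 = n+4 by ring,
            D17, v3, ih2, ih3, d13, e1]
        push_cast
        field_simp
        ring
  intro g hg
  obtain ⟨n, rfl⟩ : ∃ n, g = n + 3 := ⟨g - 3, by omega⟩
  obtain ⟨k1, k2, k3⟩ := key n
  rw [show ((n+3:ℕ):ℤ) - 3 = (n:ℤ) by push_cast; ring,
      show ((n+3:ℕ):ℤ) - 2 = (n:ℤ)+1 by push_cast; ring,
      show 6*(n+3) - 7 = 6*n+11 by omega, show 6*(n+3) - 5 = 6*n+13 by omega,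
      show n+3-2 = n+1 by omega, show n+3-3 = n by omega, k3, k2]
  have hd11 : (((6*n+11)‼ : ℕ) : ℚ) ≠ 0 := Nat.cast_ne_zero.mpr (Nat.doubleFactorial_pos _).ne'
  have hd13 : (((6*n+13)‼ : ℕ) : ℚ) ≠ 0 := Nat.cast_ne_zero.mpr (Nat.doubleFactorial_pos _).ne'
  have hfn : ((n)! : ℚ) ≠ 0 := Nat.cast_ne_zero.mpr (Nat.factorial_ne_zero _)
  have hfn1 : ((n+1)! : ℚ) ≠ 0 := Nat.cast_ne_zero.mpr (Nat.factorial_ne_zero _)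
  constructor
  · rw [show (n+1)! = (n+1) * (n)! from Nat.factorial_succ n]
    push_cast
    field_simp
    ring
  · push_cast
    field_simp
    ring
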